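/- Let ρ, e, h, ĥ, ρ̂ : ℝ³ × ℝ → ℝ, f, f̂ : ℝ³ × ℝ → ℝ³, q : ℝ³ × ℝ → ℝ³, s : ℝ³ × ℝ → Matrix (Fin 3) (Fin 3) ℝ, and u : ℝ³ × ℝ → ℝ³ with v = ∂u/∂t, all sufficiently smooth. Suppose the equation of motion ρ ∂²u/∂t² = ∇·s + ρ(f + f̂) − ρ̂ v and the total energy balance ρ ∂(e + |v|²/2)/∂t − ∇·(s·v) + ∇·q = ρ( h + ĥ + f·v − (ρ̂/ρ)(e + |v|²/2) ) hold at every point, where ρ > 0 everywhere. Then at every point the internal energy balance ρ ∂e/∂t − sᵀ:∇v + ∇·q = g holds, where g = ρ(h + ĥ) − ρ f̂·v − ρ̂ ( e − |v|²/2 ). -/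

import Mathlib

/-- Spatial partial derivative of a scalar field on `ℝ³` in the `i`-th coordinate
direction. -/
noncomputable def pd (f : (Fin 3 → ℝ) → ℝ) (i : Fin 3) (x : Fin 3 → ℝ) : ℝ :=
  fderiv ℝ f x (Pi.single i 1)

/-- Time derivative of a scalar field on space-time. -/
noncomputable def tderiv (f : (Fin 3 → ℝ) × ℝ → ℝ) (p : (Fin 3 → ℝ) × ℝ) : ℝ :=
  deriv (fun τ => f (p.1, τ)) p.2

/-- Velocity field `v = ∂u/∂t` associated with a displacement field `u`. -/
noncomputable def vel (u : (Fin 3 → ℝ) × ℝ → (Fin 3 → ℝ))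
    (p : (Fin 3 → ℝ) × ℝ) (j : Fin 3) : ℝ :=
  deriv (fun τ => u (p.1, τ) j) p.2

/-- From the equation of motion
`ρ ∂²u/∂t² = ∇·s + ρ(f + f̂) − ρ̂ v` and the total energy balance
`ρ ∂(e + |v|²/2)/∂t − ∇·(s·v) + ∇·q = ρ(h + ĥ + f·v − (ρ̂/ρ)(e + |v|²/2))`,
the internal energy balance `ρ ∂e/∂t − sᵀ:∇v + ∇·q = g` follows, where
`g = ρ(h + ĥ) − ρ f̂·v − ρ̂(e − |v|²/2)`. -/
theorem internal_energy_balance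
    (ρ e h hhat ρhat : (Fin 3 → ℝ) × ℝ → ℝ)
    (f fhat q : (Fin 3 → ℝ) × ℝ → (Fin 3 → ℝ))
    (s : (Fin 3 → ℝ) × ℝ → Matrix (Fin 3) (Fin 3) ℝ)
    (u : (Fin 3 → ℝ) × ℝ → (Fin 3 → ℝ))
    (hρpos : ∀ p : (Fin 3 → ℝ) × ℝ, 0 < ρ p)
    -- smoothness hypotheses
    (he : ∀ x : Fin 3 → ℝ, Differentiable ℝ (fun τ => e (x, τ)))
    (hv : ∀ (x : Fin 3 → ℝ) (j : Fin 3), Differentiable ℝ (fun τ => vel u (x, τ) j))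
    (hsx : ∀ (t : ℝ) (i j : Fin 3), Differentiable ℝ (fun x => s (x, t) i j))
    (hvx : ∀ (t : ℝ) (j : Fin 3), Differentiable ℝ (fun x => vel u (x, t) j))
    -- the equation of motion
    (hmotion : ∀ (p : (Fin 3 → ℝ) × ℝ) (j : Fin 3),
      ρ p * tderiv (fun r => vel u r j) p
        = (∑ i, pd (fun y => s (y, p.2) i j) i p.1)
          + ρ p * (f p j + fhat p j) - ρhat p * vel u p j)
    -- the total energy balance
    (henergy : ∀ p : (Fin 3 → ℝ) × ℝ,
      ρ p * tderiv (fun r => e r + (∑ j, (vel u r j) ^ 2) / 2) p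
        - (∑ i, pd (fun y => ∑ j, s (y, p.2) i j * vel u (y, p.2) j) i p.1)
        + (∑ i, pd (fun y => q (y, p.2) i) i p.1)
        = ρ p * (h p + hhat p + (∑ j, f p j * vel u p j)
            - (ρhat p / ρ p) * (e p + (∑ j, (vel u p j) ^ 2) / 2))) :
    -- internal energy balance
    ∀ p : (Fin 3 → ℝ) × ℝ,
      ρ p * tderiv e p
        - (∑ i, ∑ j, s p i j * pd (fun y => vel u (y, p.2) j) i p.1)
        + (∑ i, pd (fun y => q (y, p.2) i) i p.1)
        = ρ p * (h p + hhat p) - ρ p * (∑ j, fhat p j * vel u p j)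
          - ρhat p * (e p - (∑ j, (vel u p j) ^ 2) / 2) := by

  intro p
  obtain ⟨x, t⟩ := p
  have hρ := hρpos (x, t)
  have hρne : ρ (x, t) ≠ 0 := ne_of_gt hρ
  -- time derivative expansion
  have Hte : tderiv (fun r => e r + (∑ j, (vel u r j) ^ 2) / 2) (x, t)
      = tderiv e (x, t)
        + ∑ j, vel u (x, t) j * tderiv (fun r => vel u r j) (x, t) := by
    have h1 : HasDerivAt (fun τ => e (x, τ)) (tderiv e (x, t)) t :=
      ((he x) t).hasDerivAt
    have h3 : HasDerivAt (fun τ => ∑ j, (vel u (x, τ) j) ^ 2)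
        (∑ j, 2 * (vel u (x, t) j * tderiv (fun r => vel u r j) (x, t))) t := by
      apply HasDerivAt.fun_sum
      intro j _
      have h4 := (((hv x j) t).hasDerivAt).fun_pow 2
      simpa [tderiv, mul_assoc] using h4
    have h2 := h3.div_const 2
    have h5 := h1.fun_add h2
    have h6 : (∑ j, 2 * (vel u (x, t) j * tderiv (fun r => vel u r j) (x, t))) / 2
        = ∑ j, vel u (x, t) j * tderiv (fun r => vel u r j) (x, t) := by
      rw [Finset.sum_div]
      exact Finset.sum_congr rfl (fun j _ => by ring)
    rw [h6] at h5
    simpa [tderiv] using h5.deriv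
  -- spatial product rule for the stress power divergence
  have Hdiv : ∀ i, pd (fun y => ∑ j, s (y, t) i j * vel u (y, t) j) i x
      = ∑ j, (pd (fun y => s (y, t) i j) i x * vel u (x, t) j
          + s (x, t) i j * pd (fun y => vel u (y, t) j) i x) := by
    intro i
    unfold pd
    rw [fderiv_fun_sum (fun j _ => ((hsx t i j) x).fun_mul ((hvx t j) x))]
    rw [ContinuousLinearMap.sum_apply]
    refine Finset.sum_congr rfl (fun j _ => ?_)
    rw [fderiv_fun_mul ((hsx t i j) x) ((hvx t j) x)]
    simp only [ContinuousLinearMap.add_apply, ContinuousLinearMap.smul_apply,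
      smul_eq_mul]
    ring
  have hE := henergy (x, t)
  simp only [Hte] at hE
  have Hdivsum : (∑ i, pd (fun y => ∑ j, s (y, t) i j * vel u (y, t) j) i x)
      = ∑ i, ∑ j, (pd (fun y => s (y, t) i j) i x * vel u (x, t) j
          + s (x, t) i j * pd (fun y => vel u (y, t) j) i x) :=
    Finset.sum_congr rfl (fun i _ => Hdiv i)
  rw [Hdivsum] at hE
  have hcan : ∀ X : ℝ, ρ (x, t) * (ρhat (x, t) / ρ (x, t) * X) = ρhat (x, t) * X := by
    intro X; field_simp
  rw [mul_sub, hcan] at hE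
  have M0 := hmotion (x, t) 0
  have M1 := hmotion (x, t) 1
  have M2 := hmotion (x, t) 2
  simp only [Fin.sum_univ_three] at hE M0 M1 M2 ⊢
  linear_combination hE - vel u (x, t) 0 * M0 - vel u (x, t) 1 * M1
    - vel u (x, t) 2 * M2
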